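/- Let n, t, f be integers with 0 ≤ f ≤ t and 3t < n, and let c₁,…,c_{n−f} be real numbers (the correct values). Let m, m′ be integers with n−t ≤ m ≤ n and n−t ≤ m′ ≤ n, let w₁ ≤ … ≤ w_m be a sorted list of m real numbers containing all of c₁,…,c_{n−f} (with multiplicity), and let w′₁ ≤ … ≤ w′_{m′} be a sorted list of m′ real numbers containing all of c₁,…,c_{n−f} (with multiplicity). Then | (w_{m−(n−t)+1} + w_{n−t})/2 − (w′_{m′−(n−t)+1} + w′_{n−t})/2 | ≤ (max_i c_i − min_i c_i)/2; that is, the midpoints of the two trimmed intervals differ by at most half the range of the correct values. -/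
import Mathlib

/-- Pigeonhole: an injective map into `[1, m]` on a set of more than `m - j` elements
hits some position `≤ j`. -/
lemma pigeon_low {N m j : ℕ} (φ : Fin N → ℕ) (hinj : Function.Injective φ)
    (hb : ∀ i, 1 ≤ φ i ∧ φ i ≤ m) (S : Finset (Fin N)) (h : m - j < S.card) :
    ∃ i ∈ S, φ i ≤ j := by
  by_contra hc
  push_neg at hc
  have hsub : S.image φ ⊆ Finset.Ioc j m := by
    intro x hx
    simp only [Finset.mem_image] at hx
    obtain ⟨i, hi, rfl⟩ := hx
    exact Finset.mem_Ioc.2 ⟨hc i hi, (hb i).2⟩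
  have := Finset.card_le_card hsub
  rw [Finset.card_image_of_injective _ hinj, Nat.card_Ioc] at this
  omega

/-- Pigeonhole: an injective map into `[1, m]` on a set of more than `j` elements
hits some position `> j`. -/
lemma pigeon_high {N m j : ℕ} (φ : Fin N → ℕ) (hinj : Function.Injective φ)
    (hb : ∀ i, 1 ≤ φ i ∧ φ i ≤ m) (S : Finset (Fin N)) (h : j < S.card) :
    ∃ i ∈ S, j < φ i := by
  by_contra hc
  push_neg at hc
  have hsub : S.image φ ⊆ Finset.Ioc 0 j := by
    intro x hx
    simp only [Finset.mem_image] at hx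
    obtain ⟨i, hi, rfl⟩ := hx
    exact Finset.mem_Ioc.2 ⟨(hb i).1, hc i hi⟩
  have := Finset.card_le_card hsub
  rw [Finset.card_image_of_injective _ hinj, Nat.card_Ioc] at this
  omega

/-- Bounds for one trimmed interval: the lower endpoint is between `⨅ c` and the pivot `d`,
and the upper endpoint is between `d` and `⨆ c`. -/
lemma trimmed_bounds (n t f m : ℕ) (hf : f ≤ t) (ht : 3 * t < n)
    (hm1 : n - t ≤ m) (hm2 : m ≤ n)
    (c : Fin (n - f) → ℝ) (w : ℕ → ℝ)
    (hw : ∀ i j, 1 ≤ i → i ≤ j → j ≤ m → w i ≤ w j)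
    (φ : Fin (n - f) → ℕ) (hφinj : Function.Injective φ)
    (hφmem : ∀ i, 1 ≤ φ i ∧ φ i ≤ m) (hφval : ∀ i, w (φ i) = c i)
    (d : ℝ) (S T : Finset (Fin (n - f)))
    (hS : ∀ i ∈ S, c i ≤ d) (hT : ∀ i ∈ T, d ≤ c i)
    (hScard : t < S.card) (hTcard : t < T.card) :
    (⨅ i, c i) ≤ w (m - (n - t) + 1) ∧ w (m - (n - t) + 1) ≤ d ∧
      d ≤ w (n - t) ∧ w (n - t) ≤ ⨆ i, c i := by
  have hbdda : BddAbove (Set.range c) := (Set.finite_range c).bddAbove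
  have hbddb : BddBelow (Set.range c) := (Set.finite_range c).bddBelow
  have huniv : (Finset.univ : Finset (Fin (n - f))).card = n - f := by
    simp
  refine ⟨?_, ?_, ?_, ?_⟩
  · -- ⨅ c ≤ w (m - (n-t) + 1)
    obtain ⟨i, -, hi⟩ := pigeon_low φ hφinj hφmem Finset.univ
      (j := m - (n - t) + 1) (by rw [huniv]; omega)
    calc (⨅ i, c i) ≤ c i := ciInf_le hbddb i
    _ = w (φ i) := (hφval i).symm
    _ ≤ w (m - (n - t) + 1) := hw _ _ (hφmem i).1 hi (by omega)
  · -- w (m - (n-t) + 1) ≤ d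
    obtain ⟨i, hiS, hi⟩ := pigeon_high φ hφinj hφmem S (j := m - (n - t)) (by omega)
    calc w (m - (n - t) + 1) ≤ w (φ i) := hw _ _ (by omega) hi (hφmem i).2
    _ = c i := hφval i
    _ ≤ d := hS i hiS
  · -- d ≤ w (n - t)
    obtain ⟨i, hiT, hi⟩ := pigeon_low φ hφinj hφmem T (j := n - t) (by omega)
    calc d ≤ c i := hT i hiT
    _ = w (φ i) := (hφval i).symm
    _ ≤ w (n - t) := hw _ _ (hφmem i).1 hi hm1
  · -- w (n - t) ≤ ⨆ c
    obtain ⟨i, -, hi⟩ := pigeon_high φ hφinj hφmem Finset.univ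
      (j := n - t - 1) (by rw [huniv]; omega)
    calc w (n - t) ≤ w (φ i) := hw _ _ (by omega) (by omega) (hφmem i).2
    _ = c i := hφval i
    _ ≤ ⨆ i, c i := le_ciSup hbdda i

/-- Midpoint contraction: if two sorted lists `w₁ ≤ … ≤ w_m` and `w′₁ ≤ … ≤ w′_{m′}`
(with `n - t ≤ m, m′ ≤ n` and `3t < n`) each contain all `n - f` correct values
`c₁, …, c_{n-f}` with multiplicity, then the midpoints of the two trimmed intervals differ
by at most half the range of the correct values. -/
theorem trimmed_midpoints_close (n t f m m' : ℕ) (hf : f ≤ t) (ht : 3 * t < n)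
    (hm1 : n - t ≤ m) (hm2 : m ≤ n) (hm'1 : n - t ≤ m') (hm'2 : m' ≤ n)
    (c : Fin (n - f) → ℝ) (w w' : ℕ → ℝ)
    (hw : ∀ i j, 1 ≤ i → i ≤ j → j ≤ m → w i ≤ w j)
    (hw' : ∀ i j, 1 ≤ i → i ≤ j → j ≤ m' → w' i ≤ w' j)
    (φ : Fin (n - f) → ℕ) (hφinj : Function.Injective φ)
    (hφmem : ∀ i, 1 ≤ φ i ∧ φ i ≤ m) (hφval : ∀ i, w (φ i) = c i)
    (ψ : Fin (n - f) → ℕ) (hψinj : Function.Injective ψ)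
    (hψmem : ∀ i, 1 ≤ ψ i ∧ ψ i ≤ m') (hψval : ∀ i, w' (ψ i) = c i) :
    |(w (m - (n - t) + 1) + w (n - t)) / 2 - (w' (m' - (n - t) + 1) + w' (n - t)) / 2|
      ≤ ((⨆ i, c i) - ⨅ i, c i) / 2 := by
  -- the pivot: the (t+1)-st smallest correct value
  have htn : t < n - f := by omega
  set σ := Tuple.sort c with hσ
  have hmono : Monotone (c ∘ σ) := Tuple.monotone_sort c
  set p : Fin (n - f) := ⟨t, htn⟩ with hp
  set d : ℝ := c (σ p) with hd
  set S : Finset (Fin (n - f)) := (Finset.Iic p).image σ with hSdef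
  set T : Finset (Fin (n - f)) := (Finset.Ici p).image σ with hTdef
  have hS : ∀ i ∈ S, c i ≤ d := by
    intro i hi
    simp only [hSdef, Finset.mem_image, Finset.mem_Iic] at hi
    obtain ⟨j, hj, rfl⟩ := hi
    exact hmono hj
  have hT : ∀ i ∈ T, d ≤ c i := by
    intro i hi
    simp only [hTdef, Finset.mem_image, Finset.mem_Ici] at hi
    obtain ⟨j, hj, rfl⟩ := hi
    exact hmono hj
  have hScard : t < S.card := by
    rw [hSdef, Finset.card_image_of_injective _ σ.injective, Fin.card_Iic]
    have hpv : (p : ℕ) = t := rfl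
    rw [hpv]
    omega
  have hTcard : t < T.card := by
    rw [hTdef, Finset.card_image_of_injective _ σ.injective, Fin.card_Ici]
    have hpv : (p : ℕ) = t := rfl
    rw [hpv]
    omega
  obtain ⟨h1, h2, h3, h4⟩ := trimmed_bounds n t f m hf ht hm1 hm2 c w hw
    φ hφinj hφmem hφval d S T hS hT hScard hTcard
  obtain ⟨h1', h2', h3', h4'⟩ := trimmed_bounds n t f m' hf ht hm'1 hm'2 c w' hw'
    ψ hψinj hψmem hψval d S T hS hT hScard hTcard
  rw [abs_sub_le_iff]
  constructor <;> linarith
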